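/- For 1 < p < 2, the curvature function c_p(θ) = ((p-1)/p) (1/2)^{2(1-2/p)} (sin 2θ)^{2(1-2/p)} / [(cos θ)^{4/p̃} + (sin θ)^{4/p̃}]^{3/2} (with 1/p + 1/p̃ = 1) is strictly decreasing for θ ∈ (0, π/4). -/

import Mathlib

open Real Filter Topology

/-- Curvature of the α-geometry on `P¹₂`, parametrized by `ρ = (cos²θ, sin²θ)`. -/
noncomputable def cCurv (p pt θ : ℝ) : ℝ :=
  ((p - 1) / p) * (1 / 2 : ℝ) ^ (2 * (1 - 2 / p)) *
    (Real.sin (2 * θ)) ^ (2 * (1 - 2 / p)) /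
      ((Real.cos θ) ^ (4 / pt) + (Real.sin θ) ^ (4 / pt)) ^ ((3 : ℝ) / 2)

lemma denomMono (a : ℝ) (ha0 : 0 < a) (ha2 : a < 2) :
    StrictMonoOn (fun θ : ℝ => Real.cos θ ^ a + Real.sin θ ^ a) (Set.Ioo 0 (π / 4)) := by
  apply strictMonoOn_of_deriv_pos (convex_Ioo _ _)
  · apply ContinuousOn.add
    · exact Real.continuous_cos.continuousOn.rpow_const (fun x _ => Or.inr ha0.le)
    · exact Real.continuous_sin.continuousOn.rpow_const (fun x _ => Or.inr ha0.le)
  · intro x hx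
    rw [interior_Ioo] at hx
    obtain ⟨hx0, hx4⟩ := hx
    have hpi : (0:ℝ) < π := Real.pi_pos
    have hc : 0 < Real.cos x := Real.cos_pos_of_mem_Ioo ⟨by linarith, by linarith⟩
    have hs : 0 < Real.sin x := Real.sin_pos_of_pos_of_lt_pi hx0 (by linarith)
    have hsc : Real.sin x < Real.cos x := by
      rw [← Real.sin_pi_div_two_sub]
      exact Real.strictMonoOn_sin ⟨by linarith, by linarith⟩
        ⟨by linarith, by linarith⟩ (by linarith)
    have d1 : HasDerivAt (fun θ : ℝ => Real.cos θ ^ a)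
        (-Real.sin x * a * Real.cos x ^ (a - 1)) x :=
      (Real.hasDerivAt_cos x).rpow_const (Or.inl hc.ne')
    have d2 : HasDerivAt (fun θ : ℝ => Real.sin θ ^ a)
        (Real.cos x * a * Real.sin x ^ (a - 1)) x :=
      (Real.hasDerivAt_sin x).rpow_const (Or.inl hs.ne')
    rw [(show HasDerivAt (fun θ : ℝ => Real.cos θ ^ a + Real.sin θ ^ a) _ x from d1.add d2).deriv]
    have key : Real.cos x ^ (a - 2) < Real.sin x ^ (a - 2) :=
      Real.rpow_lt_rpow_of_neg hs hsc (by linarith)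
    have h1 : Real.cos x ^ (a - 1) = Real.cos x * Real.cos x ^ (a - 2) := by
      rw [show a - 1 = 1 + (a - 2) by ring, Real.rpow_add hc, Real.rpow_one]
    have h2 : Real.sin x ^ (a - 1) = Real.sin x * Real.sin x ^ (a - 2) := by
      rw [show a - 1 = 1 + (a - 2) by ring, Real.rpow_add hs, Real.rpow_one]
    rw [h1, h2]
    have hprod : 0 < a * (Real.sin x * Real.cos x) *
        (Real.sin x ^ (a - 2) - Real.cos x ^ (a - 2)) :=
      mul_pos (mul_pos ha0 (mul_pos hs hc)) (by linarith)
    nlinarith [hprod]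

/-- For `1 < p < 2` the curvature `c_p` is strictly decreasing on `(0, π/4)`. -/
theorem cCurv_strictAntiOn (p pt : ℝ) (hp1 : 1 < p) (hp2 : p < 2)
    (hpt : 1 / p + 1 / pt = 1) :
    StrictAntiOn (cCurv p pt) (Set.Ioo 0 (π / 4)) := by
  have hp0 : (0:ℝ) < p := by linarith
  have hinv1 : 1 / p < 1 := (div_lt_one hp0).2 hp1
  have hinv2 : (1:ℝ) / 2 < 1 / p := by
    rw [div_lt_div_iff₀ (by norm_num) hp0]; linarith
  have h1pt : 1 / pt = 1 - 1 / p := by linarith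
  have ha0 : 0 < 4 / pt := by
    have : 4 / pt = 4 * (1 / pt) := by ring
    rw [this, h1pt]; linarith
  have ha2 : 4 / pt < 2 := by
    have : 4 / pt = 4 * (1 / pt) := by ring
    rw [this, h1pt]; linarith
  have he : 2 * (1 - 2 / p) < 0 := by
    have : 1 < 2 / p := (one_lt_div hp0).2 hp2
    linarith
  intro x hx y hy hxy
  obtain ⟨hx0, hx4⟩ := hx
  obtain ⟨hy0, hy4⟩ := hy
  have hpi : (0:ℝ) < π := Real.pi_pos
  -- numerator
  have hs2x : 0 < Real.sin (2 * x) := Real.sin_pos_of_pos_of_lt_pi (by linarith) (by linarith)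
  have hs2y : 0 < Real.sin (2 * y) := Real.sin_pos_of_pos_of_lt_pi (by linarith) (by linarith)
  have hslt : Real.sin (2 * x) < Real.sin (2 * y) :=
    Real.strictMonoOn_sin ⟨by linarith, by linarith⟩ ⟨by linarith, by linarith⟩ (by linarith)
  have hN : Real.sin (2 * y) ^ (2 * (1 - 2 / p)) < Real.sin (2 * x) ^ (2 * (1 - 2 / p)) :=
    Real.rpow_lt_rpow_of_neg hs2x hslt he
  -- denominator
  have hD : Real.cos x ^ (4 / pt) + Real.sin x ^ (4 / pt)
      < Real.cos y ^ (4 / pt) + Real.sin y ^ (4 / pt) :=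
    denomMono (4 / pt) ha0 ha2 ⟨hx0, hx4⟩ ⟨hy0, hy4⟩ hxy
  have hcx : 0 < Real.cos x := Real.cos_pos_of_mem_Ioo ⟨by linarith, by linarith⟩
  have hsx : 0 < Real.sin x := Real.sin_pos_of_pos_of_lt_pi hx0 (by linarith)
  have hDx : 0 < Real.cos x ^ (4 / pt) + Real.sin x ^ (4 / pt) :=
    add_pos (Real.rpow_pos_of_pos hcx _) (Real.rpow_pos_of_pos hsx _)
  have hDy : 0 < Real.cos y ^ (4 / pt) + Real.sin y ^ (4 / pt) := by linarith
  have hDp : (Real.cos x ^ (4 / pt) + Real.sin x ^ (4 / pt)) ^ ((3:ℝ)/2)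
      < (Real.cos y ^ (4 / pt) + Real.sin y ^ (4 / pt)) ^ ((3:ℝ)/2) :=
    Real.rpow_lt_rpow hDx.le hD (by norm_num)
  have hDpx : 0 < (Real.cos x ^ (4 / pt) + Real.sin x ^ (4 / pt)) ^ ((3:ℝ)/2) :=
    Real.rpow_pos_of_pos hDx _
  have hDpy : 0 < (Real.cos y ^ (4 / pt) + Real.sin y ^ (4 / pt)) ^ ((3:ℝ)/2) :=
    Real.rpow_pos_of_pos hDy _
  have hC : 0 < (p - 1) / p * (1 / 2 : ℝ) ^ (2 * (1 - 2 / p)) :=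
    mul_pos (div_pos (by linarith) hp0) (Real.rpow_pos_of_pos one_half_pos _)
  have hNy : 0 < Real.sin (2 * y) ^ (2 * (1 - 2 / p)) := Real.rpow_pos_of_pos hs2y _
  unfold cCurv
  rw [div_lt_div_iff₀ hDpy hDpx]
  have key := mul_lt_mul'' hN hDp hNy.le hDpx.le
  nlinarith [mul_lt_mul_of_pos_left key hC]
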